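/- In the coordinate quasi-Codazzi setup on U, assume both relative torsions vanish: T⁺(X,Y) = 0 and T⁻(X,Y) = 0 for all smooth vector fields X, Y (i.e. the data form a quasi-Codazzi structure). Then: (a) C is totally symmetric, i.e. C(X,Y,Z) = C(Y,X,Z) and C(X,Y,Z) = C(X,Z,Y) for all smooth vector fields X, Y, Z; and (b) the Kossowski pseudo-connection satisfies Γ(X,Y,Z)(x) = p x ((∇⁺_X(Φ⁺Y))(x)) (Φ⁻ x (Z x)) + p x (Φ⁺ x (Z x)) ((∇⁻_X(Φ⁻Y))(x)) for all smooth vector fields X, Y, Z and all x ∈ U. (Paper's Proposition 3.20, part (1).) -/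

import Mathlib

noncomputable section

open Set

/-- ℝⁿ. -/
abbrev Vn (n : ℕ) : Type := Fin n → ℝ

/-- Pairings (fiber metrics pairing `E⁺` with `E⁻`) on the trivialized bundle. -/
abbrev Pairn (n : ℕ) : Type := Vn n →L[ℝ] Vn n →L[ℝ] ℝ

/-- Connection forms on the trivialized bundle. -/
abbrev Connn (n : ℕ) : Type := Vn n →L[ℝ] Vn n →L[ℝ] Vn n

/-- Bundle maps `TU → E±` in the trivialization. -/
abbrev Bdln (n : ℕ) : Type := Vn n →L[ℝ] Vn n

/-- Covariant derivative of the section `ν` along the vector field `X`,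
for the connection with connection form `A`. -/
def cov {n : ℕ} (A : Vn n → Connn n) (X ν : Vn n → Vn n) (x : Vn n) : Vn n :=
  fderiv ℝ ν x (X x) + A x (X x) (ν x)

/-- Lie bracket of vector fields on an open set of ℝⁿ. -/
def lieB {n : ℕ} (X Y : Vn n → Vn n) (x : Vn n) : Vn n :=
  fderiv ℝ Y x (X x) - fderiv ℝ X x (Y x)

/-- The section `Φ±Y : x ↦ Φ± x (Y x)`. -/
def secPhi {n : ℕ} (Φ : Vn n → Bdln n) (Y : Vn n → Vn n) : Vn n → Vn n :=
  fun x => Φ x (Y x)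

/-- The induced (possibly degenerate) metric `h x y z = 2 p x (Φ⁺ x y) (Φ⁻ x z)`. -/
def hmet {n : ℕ} (p : Vn n → Pairn n) (Φp Φm : Vn n → Bdln n) (x y z : Vn n) : ℝ :=
  2 * p x (Φp x y) (Φm x z)

/-- The generalized Amari–Chentsov cubic tensor. -/
def Ctensor {n : ℕ} (p : Vn n → Pairn n) (Ap Am : Vn n → Connn n)
    (Φp Φm : Vn n → Bdln n) (X Y Z : Vn n → Vn n) (x : Vn n) : ℝ :=
  -2 * (p x (cov Ap X (secPhi Φp Y) x) (Φm x (Z x))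
        - p x (Φp x (Z x)) (cov Am X (secPhi Φm Y) x))

/-- The relative torsion `T(X,Y) = ∇_X(ΦY) − ∇_Y(ΦX) − Φ[X,Y]`. -/
def Ttor {n : ℕ} (A : Vn n → Connn n) (Φ : Vn n → Bdln n)
    (X Y : Vn n → Vn n) (x : Vn n) : Vn n :=
  cov A X (secPhi Φ Y) x - cov A Y (secPhi Φ X) x - Φ x (lieB X Y x)

/-- The Kossowski pseudo-connection. -/
def Koss {n : ℕ} (p : Vn n → Pairn n) (Φp Φm : Vn n → Bdln n)
    (X Y Z : Vn n → Vn n) (x : Vn n) : ℝ :=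
  fderiv ℝ (fun y => p y (Φp y (Y y)) (Φm y (Z y))) x (X x)
  + fderiv ℝ (fun y => p y (Φp y (Z y)) (Φm y (X y))) x (Y x)
  - fderiv ℝ (fun y => p y (Φp y (X y)) (Φm y (Y y))) x (Z x)
  - p x (Φp x (X x)) (Φm x (lieB Y Z x))
  + p x (Φp x (Y x)) (Φm x (lieB Z X x))
  + p x (Φp x (Z x)) (Φm x (lieB X Y x))

/-- The curvature of a connection form `A` at `x` in directions `v`, `w`. -/
def curvA {n : ℕ} (A : Vn n → Connn n) (x v w : Vn n) : Vn n →L[ℝ] Vn n :=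
  fderiv ℝ A x v w - fderiv ℝ A x w v + (A x v).comp (A x w) - (A x w).comp (A x v)

lemma myfderiv_pair
    {n : ℕ} {U : Set (Vn n)} (hU : IsOpen U)
    (p : Vn n → Pairn n) (hp : ContDiffOn ℝ (⊤:ℕ∞) p U)
    (Ap Am : Vn n → Connn n)
    (hdual : ∀ x ∈ U, ∀ v a b : Vn n,
      fderiv ℝ p x v a b = p x (Ap x v a) b + p x a (Am x v b))
    (μ ν : Vn n → Vn n) (hμ : ContDiffOn ℝ (⊤:ℕ∞) μ U) (hν : ContDiffOn ℝ (⊤:ℕ∞) ν U)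
    {x : Vn n} (hx : x ∈ U) (v : Vn n) :
    fderiv ℝ (fun y => p y (μ y) (ν y)) x v
      = p x (fderiv ℝ μ x v + Ap x v (μ x)) (ν x)
        + p x (μ x) (fderiv ℝ ν x v + Am x v (ν x)) := by
  have hnx := hU.mem_nhds hx
  have hpx : DifferentiableAt ℝ p x := (hp.contDiffAt hnx).differentiableAt (by simp)
  have hμx : DifferentiableAt ℝ μ x := (hμ.contDiffAt hnx).differentiableAt (by simp)
  have hνx : DifferentiableAt ℝ ν x := (hν.contDiffAt hnx).differentiableAt (by simp)
  have hg : DifferentiableAt ℝ (fun y => p y (μ y)) x := hpx.clm_apply hμx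
  have h1 : fderiv ℝ (fun y => p y (μ y) (ν y)) x
      = ((fun y => p y (μ y)) x).comp (fderiv ℝ ν x)
        + (fderiv ℝ (fun y => p y (μ y)) x).flip (ν x) := fderiv_clm_apply hg hνx
  have h2 : fderiv ℝ (fun y => p y (μ y)) x
      = (p x).comp (fderiv ℝ μ x) + (fderiv ℝ p x).flip (μ x) := fderiv_clm_apply hpx hμx
  rw [h1]
  simp only [ContinuousLinearMap.add_apply, ContinuousLinearMap.comp_apply,
    ContinuousLinearMap.flip_apply, h2, map_add, hdual x hx v (μ x) (ν x)]
  ring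

/-- Identity (I): derivative of `p(Φ⁺a, Φ⁻b)` along `W`. -/
lemma ident_I
    {n : ℕ} {U : Set (Vn n)} (hU : IsOpen U)
    (p : Vn n → Pairn n) (hp : ContDiffOn ℝ (⊤:ℕ∞) p U)
    (Ap Am : Vn n → Connn n)
    (hdual : ∀ x ∈ U, ∀ v a b : Vn n,
      fderiv ℝ p x v a b = p x (Ap x v a) b + p x a (Am x v b))
    (Φp Φm : Vn n → Bdln n)
    (hΦp : ContDiffOn ℝ (⊤:ℕ∞) Φp U) (hΦm : ContDiffOn ℝ (⊤:ℕ∞) Φm U)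
    (a b : Vn n → Vn n) (ha : ContDiffOn ℝ (⊤:ℕ∞) a U) (hb : ContDiffOn ℝ (⊤:ℕ∞) b U)
    {x : Vn n} (hx : x ∈ U) (W : Vn n → Vn n) :
    fderiv ℝ (fun y => p y (Φp y (a y)) (Φm y (b y))) x (W x)
      = p x (cov Ap W (secPhi Φp a) x) (Φm x (b x))
        + p x (Φp x (a x)) (cov Am W (secPhi Φm b) x) := by
  have := myfderiv_pair hU p hp Ap Am hdual (secPhi Φp a) (secPhi Φm b)
    (hΦp.clm_apply ha) (hΦm.clm_apply hb) hx (W x)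
  simpa [cov, secPhi] using this

/-- Identity (II): symmetrized derivative identity from the Lagrangian condition. -/
lemma ident_II
    {n : ℕ} {U : Set (Vn n)} (hU : IsOpen U)
    (p : Vn n → Pairn n) (hp : ContDiffOn ℝ (⊤:ℕ∞) p U)
    (Ap Am : Vn n → Connn n)
    (hdual : ∀ x ∈ U, ∀ v a b : Vn n,
      fderiv ℝ p x v a b = p x (Ap x v a) b + p x a (Am x v b))
    (Φp Φm : Vn n → Bdln n)
    (hΦp : ContDiffOn ℝ (⊤:ℕ∞) Φp U) (hΦm : ContDiffOn ℝ (⊤:ℕ∞) Φm U)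
    (hLag : ∀ x ∈ U, ∀ y z : Vn n, p x (Φp x y) (Φm x z) = p x (Φp x z) (Φm x y))
    (a b : Vn n → Vn n) (ha : ContDiffOn ℝ (⊤:ℕ∞) a U) (hb : ContDiffOn ℝ (⊤:ℕ∞) b U)
    {x : Vn n} (hx : x ∈ U) (W : Vn n → Vn n) :
    p x (cov Ap W (secPhi Φp a) x) (Φm x (b x))
      + p x (Φp x (a x)) (cov Am W (secPhi Φm b) x)
    = p x (cov Ap W (secPhi Φp b) x) (Φm x (a x))
      + p x (Φp x (b x)) (cov Am W (secPhi Φm a) x) := by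
  have heq : (fun y => p y (Φp y (a y)) (Φm y (b y)))
      =ᶠ[nhds x] (fun y => p y (Φp y (b y)) (Φm y (a y))) :=
    Filter.eventuallyEq_of_mem (hU.mem_nhds hx) (fun y hy => hLag y hy (a y) (b y))
  have hfd : fderiv ℝ (fun y => p y (Φp y (a y)) (Φm y (b y))) x (W x)
      = fderiv ℝ (fun y => p y (Φp y (b y)) (Φm y (a y))) x (W x) := by
    rw [heq.fderiv_eq]
  rw [ident_I hU p hp Ap Am hdual Φp Φm hΦp hΦm a b ha hb hx W,
      ident_I hU p hp Ap Am hdual Φp Φm hΦp hΦm b a hb ha hx W] at hfd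
  exact hfd

/-- Bracket expansion via vanishing of the relative torsion (minus side, paired). -/
lemma ident_Br
    {n : ℕ} {U : Set (Vn n)}
    (p : Vn n → Pairn n) (Am : Vn n → Connn n) (Φp Φm : Vn n → Bdln n)
    (hTm : ∀ X Y : Vn n → Vn n,
      ContDiffOn ℝ (⊤ : ℕ∞) X U → ContDiffOn ℝ (⊤ : ℕ∞) Y U →
      ∀ x ∈ U, Ttor Am Φm X Y x = 0)
    (a b c : Vn n → Vn n) (ha : ContDiffOn ℝ (⊤:ℕ∞) a U) (hb : ContDiffOn ℝ (⊤:ℕ∞) b U)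
    {x : Vn n} (hx : x ∈ U) :
    p x (Φp x (c x)) (Φm x (lieB a b x))
      = p x (Φp x (c x)) (cov Am a (secPhi Φm b) x)
        - p x (Φp x (c x)) (cov Am b (secPhi Φm a) x) := by
  have h := hTm a b ha hb x hx
  unfold Ttor at h
  rw [sub_eq_zero] at h
  rw [← h, map_sub]

/-- Identity (III): torsion symmetry identity. -/
lemma ident_III
    {n : ℕ} {U : Set (Vn n)}
    (p : Vn n → Pairn n) (Ap Am : Vn n → Connn n) (Φp Φm : Vn n → Bdln n)
    (hLag : ∀ x ∈ U, ∀ y z : Vn n, p x (Φp x y) (Φm x z) = p x (Φp x z) (Φm x y))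
    (hTp : ∀ X Y : Vn n → Vn n,
      ContDiffOn ℝ (⊤ : ℕ∞) X U → ContDiffOn ℝ (⊤ : ℕ∞) Y U →
      ∀ x ∈ U, Ttor Ap Φp X Y x = 0)
    (hTm : ∀ X Y : Vn n → Vn n,
      ContDiffOn ℝ (⊤ : ℕ∞) X U → ContDiffOn ℝ (⊤ : ℕ∞) Y U →
      ∀ x ∈ U, Ttor Am Φm X Y x = 0)
    (a b c : Vn n → Vn n) (ha : ContDiffOn ℝ (⊤:ℕ∞) a U) (hb : ContDiffOn ℝ (⊤:ℕ∞) b U)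
    {x : Vn n} (hx : x ∈ U) :
    p x (cov Ap a (secPhi Φp b) x) (Φm x (c x))
      - p x (cov Ap b (secPhi Φp a) x) (Φm x (c x))
    = p x (Φp x (c x)) (cov Am a (secPhi Φm b) x)
      - p x (Φp x (c x)) (cov Am b (secPhi Φm a) x) := by
  have hp2 : Φp x (lieB a b x) = cov Ap a (secPhi Φp b) x - cov Ap b (secPhi Φp a) x := by
    have h := hTp a b ha hb x hx
    unfold Ttor at h
    rw [sub_eq_zero] at h
    exact h.symm
  calc p x (cov Ap a (secPhi Φp b) x) (Φm x (c x))
        - p x (cov Ap b (secPhi Φp a) x) (Φm x (c x))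
      = p x (cov Ap a (secPhi Φp b) x - cov Ap b (secPhi Φp a) x) (Φm x (c x)) := by
        rw [map_sub]; rfl
    _ = p x (Φp x (lieB a b x)) (Φm x (c x)) := by rw [hp2]
    _ = p x (Φp x (c x)) (Φm x (lieB a b x)) := hLag x hx _ _
    _ = _ := ident_Br p Am Φp Φm hTm a b c ha hb hx

/-- Paper's Proposition 3.20, part (1): in the coordinate quasi-Codazzi setup,
if both relative torsions vanish (quasi-Codazzi structure), then (a) the
generalized cubic tensor `C` is totally symmetric, and (b) the Kossowski
pseudo-connection satisfies `Γ(X,Y,Z) = p(∇⁺_X(Φ⁺Y), Φ⁻Z) + p(Φ⁺Z, ∇⁻_X(Φ⁻Y))`. -/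
theorem statement14 {n : ℕ} (U : Set (Vn n)) (hUopen : IsOpen U)
    (p : Vn n → Pairn n) (hpsmooth : ContDiffOn ℝ (⊤ : ℕ∞) p U)
    (Ap Am : Vn n → Connn n)
    (hApsmooth : ContDiffOn ℝ (⊤ : ℕ∞) Ap U) (hAmsmooth : ContDiffOn ℝ (⊤ : ℕ∞) Am U)
    (hdual : ∀ x ∈ U, ∀ v a b : Vn n,
      fderiv ℝ p x v a b = p x (Ap x v a) b + p x a (Am x v b))
    (Φp Φm : Vn n → Bdln n)
    (hΦpsmooth : ContDiffOn ℝ (⊤ : ℕ∞) Φp U) (hΦmsmooth : ContDiffOn ℝ (⊤ : ℕ∞) Φm U)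
    (hLag : ∀ x ∈ U, ∀ y z : Vn n, p x (Φp x y) (Φm x z) = p x (Φp x z) (Φm x y))
    -- vanishing of both relative torsions
    (hTp : ∀ X Y : Vn n → Vn n,
      ContDiffOn ℝ (⊤ : ℕ∞) X U → ContDiffOn ℝ (⊤ : ℕ∞) Y U →
      ∀ x ∈ U, Ttor Ap Φp X Y x = 0)
    (hTm : ∀ X Y : Vn n → Vn n,
      ContDiffOn ℝ (⊤ : ℕ∞) X U → ContDiffOn ℝ (⊤ : ℕ∞) Y U →
      ∀ x ∈ U, Ttor Am Φm X Y x = 0) :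
    -- (a) C is totally symmetric
    (∀ X Y Z : Vn n → Vn n,
      ContDiffOn ℝ (⊤ : ℕ∞) X U → ContDiffOn ℝ (⊤ : ℕ∞) Y U → ContDiffOn ℝ (⊤ : ℕ∞) Z U →
      ∀ x ∈ U,
        Ctensor p Ap Am Φp Φm X Y Z x = Ctensor p Ap Am Φp Φm Y X Z x ∧
        Ctensor p Ap Am Φp Φm X Y Z x = Ctensor p Ap Am Φp Φm X Z Y x) ∧
    -- (b) the Kossowski pseudo-connection identity
    (∀ X Y Z : Vn n → Vn n,
      ContDiffOn ℝ (⊤ : ℕ∞) X U → ContDiffOn ℝ (⊤ : ℕ∞) Y U → ContDiffOn ℝ (⊤ : ℕ∞) Z U →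
      ∀ x ∈ U,
        Koss p Φp Φm X Y Z x
          = p x (cov Ap X (secPhi Φp Y) x) (Φm x (Z x))
            + p x (Φp x (Z x)) (cov Am X (secPhi Φm Y) x)) := by
  constructor
  · intro X Y Z hX hY hZ x hx
    have hII := ident_II hUopen p hpsmooth Ap Am hdual Φp Φm hΦpsmooth hΦmsmooth hLag
      Y Z hY hZ hx X
    have hIII := ident_III p Ap Am Φp Φm hLag hTp hTm X Y Z hX hY hx
    constructor
    · simp only [Ctensor]; linarith [hIII]
    · simp only [Ctensor]; linarith [hII]
  · intro X Y Z hX hY hZ x hx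
    have hI1 := ident_I hUopen p hpsmooth Ap Am hdual Φp Φm hΦpsmooth hΦmsmooth
      Y Z hY hZ hx X
    have hI2 := ident_I hUopen p hpsmooth Ap Am hdual Φp Φm hΦpsmooth hΦmsmooth
      Z X hZ hX hx Y
    have hI3 := ident_I hUopen p hpsmooth Ap Am hdual Φp Φm hΦpsmooth hΦmsmooth
      X Y hX hY hx Z
    have hBr1 := ident_Br p Am Φp Φm hTm Y Z X hY hZ hx
    have hBr2 := ident_Br p Am Φp Φm hTm Z X Y hZ hX hx
    have hBr3 := ident_Br p Am Φp Φm hTm X Y Z hX hY hx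
    have hIIX := ident_II hUopen p hpsmooth Ap Am hdual Φp Φm hΦpsmooth hΦmsmooth hLag
      Y Z hY hZ hx X
    have hIIY := ident_II hUopen p hpsmooth Ap Am hdual Φp Φm hΦpsmooth hΦmsmooth hLag
      Z X hZ hX hx Y
    have hIIZ := ident_II hUopen p hpsmooth Ap Am hdual Φp Φm hΦpsmooth hΦmsmooth hLag
      Y X hY hX hx Z
    have hIIIXY := ident_III p Ap Am Φp Φm hLag hTp hTm X Y Z hX hY hx
    have hIIIYZ := ident_III p Ap Am Φp Φm hLag hTp hTm Y Z X hY hZ hx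
    have hIIIZX := ident_III p Ap Am Φp Φm hLag hTp hTm Z X Y hZ hX hx
    simp only [Koss]
    rw [hI1, hI2, hI3, hBr1, hBr2, hBr3]
    linarith [hIIX, hIIY, hIIZ, hIIIXY, hIIIYZ, hIIIZX]
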